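/- The function t ↦ f(t)·f'(t)/t is strictly decreasing on (0, ∞). -/

import Mathlib

theorem stmt_9 (f : ℝ → ℝ) (hf0 : f 0 = 0) (hodd : ∀ t : ℝ, f (-t) = -f t)
    (hf1 : ∀ t : ℝ, 0 ≤ t → HasDerivAt f ((1 + 2 * f t ^ 2) ^ (-(1/2) : ℝ)) t) :
    StrictAntiOn (fun t : ℝ => f t * deriv f t / t) (Set.Ioi 0) := by
  set u : ℝ → ℝ := fun t => 1 + 2 * f t ^ 2 with hu_def
  have hupos : ∀ t, 0 < u t := fun t => by positivity
  have hcont : ContinuousOn f (Set.Ici 0) :=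
    fun t ht => ((hf1 t ht).continuousAt).continuousWithinAt
  have hderiv_pos : ∀ t : ℝ, 0 < (u t) ^ (-(1/2) : ℝ) :=
    fun t => Real.rpow_pos_of_pos (hupos t) _
  have hmono : StrictMonoOn f (Set.Ici 0) := by
    apply strictMonoOn_of_deriv_pos (convex_Ici 0) hcont
    intro t ht
    rw [interior_Ici] at ht
    rw [(hf1 t (le_of_lt ht)).deriv]
    exact hderiv_pos t
  have hfpos : ∀ t : ℝ, 0 < t → 0 < f t := fun t ht => by
    have := hmono Set.self_mem_Ici (Set.mem_Ici.2 ht.le) ht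
    rwa [hf0] at this
  set h : ℝ → ℝ := fun t => f t * (u t) ^ (-(1/2) : ℝ) with hh_def
  have hderiv : ∀ t : ℝ, 0 ≤ t → HasDerivAt h ((u t ^ 2)⁻¹) t := by
    intro t ht
    have hft := hf1 t ht
    have hu : HasDerivAt u (4 * f t * ((u t) ^ (-(1/2):ℝ))) t := by
      have := ((hft.pow 2).const_mul (2:ℝ)).const_add (1:ℝ)
      refine this.congr_deriv ?_
      push_cast
      ring
    have hw : HasDerivAt (fun x : ℝ => x ^ (-(1/2):ℝ))
        ((-(1/2):ℝ) * (u t) ^ ((-(1/2):ℝ) - 1)) (u t) :=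
      Real.hasDerivAt_rpow_const (Or.inl (hupos t).ne')
    have hcomp := hw.comp t hu
    have hmul := hft.mul hcomp
    refine hmul.congr_deriv ?_
    have pA : (0:ℝ) < u t := hupos t
    have e1 : (u t) ^ (-(1/2):ℝ) * (u t) ^ (-(1/2):ℝ) = (u t)⁻¹ := by
      rw [← Real.rpow_add pA]
      norm_num
      rw [Real.rpow_neg_one]
    have e2 : (u t) ^ ((-(1/2):ℝ) - 1) * (u t) ^ (-(1/2):ℝ) = (u t ^ 2)⁻¹ := by
      rw [← Real.rpow_add pA]
      rw [show (-(1/2):ℝ) - 1 + (-(1/2)) = -2 by norm_num]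
      rw [Real.rpow_neg pA.le, show ((2:ℝ)) = ((2:ℕ):ℝ) by norm_num, Real.rpow_natCast]
    have hut : u t = 1 + 2 * f t ^ 2 := rfl
    have hne : u t ≠ 0 := pA.ne'
    have goal2 : (u t ^ 2)⁻¹ =
        (u t) ^ (-(1/2):ℝ) * (u t) ^ (-(1/2):ℝ)
          + f t * ((-(1/2):ℝ) * (u t) ^ ((-(1/2):ℝ) - 1) * (4 * f t * ((u t) ^ (-(1/2):ℝ)))) := by
      have : f t * ((-(1/2):ℝ) * (u t) ^ ((-(1/2):ℝ) - 1) * (4 * f t * ((u t) ^ (-(1/2):ℝ))))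
          = -2 * f t ^ 2 * (u t ^ 2)⁻¹ := by
        rw [show (-(1/2):ℝ) * (u t) ^ ((-(1/2):ℝ) - 1) * (4 * f t * ((u t) ^ (-(1/2):ℝ)))
            = -2 * f t * ((u t) ^ ((-(1/2):ℝ) - 1) * (u t) ^ (-(1/2):ℝ)) by ring, e2]
        ring
      rw [this, e1]
      rw [hut]
      field_simp
      ring
    simpa using goal2.symm
  have hderiv_h_eq : ∀ t ∈ Set.Ioi (0:ℝ), deriv h t = (u t ^ 2)⁻¹ :=
    fun t ht => (hderiv t (le_of_lt ht)).deriv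
  have hconc : StrictConcaveOn ℝ (Set.Ici 0) h := by
    apply StrictAntiOn.strictConcaveOn_of_deriv (convex_Ici 0)
    · exact fun t ht => ((hderiv t ht).continuousAt).continuousWithinAt
    · rw [interior_Ici]
      intro a ha b hb hab
      rw [hderiv_h_eq a ha, hderiv_h_eq b hb]
      have hfa : 0 < f a := hfpos a ha
      have hfb : f a < f b := hmono (Set.mem_Ici.2 (le_of_lt ha)) (Set.mem_Ici.2 (le_of_lt hb)) hab
      have huab : u a < u b := by
        simp only [hu_def]
        nlinarith
      gcongr <;> nlinarith [hupos a, hupos b]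
  intro a ha b hb hab
  have h0 : h 0 = 0 := by simp [hh_def, hf0]
  have key := hconc.secant_strict_mono Set.self_mem_Ici
    (Set.mem_Ici.2 (le_of_lt ha)) (Set.mem_Ici.2 (le_of_lt hb))
    (ne_of_gt ha) (ne_of_gt hb) hab
  simp only [h0, sub_zero] at key
  have ea : deriv f a = (u a) ^ (-(1/2):ℝ) := (hf1 a (le_of_lt ha)).deriv
  have eb : deriv f b = (u b) ^ (-(1/2):ℝ) := (hf1 b (le_of_lt hb)).deriv
  show f b * deriv f b / b < f a * deriv f a / a
  rw [ea, eb]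
  exact key
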